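/- Let L ⊆ X be a closed subspace and let p be a local peak selection of E at v⁰ ∈ S_{L⊥} with respect to L which is continuous at v⁰ and satisfies inf_{u∈L} ‖p(v⁰) − u‖ ≥ α for some constant α > 0. Set w⁰ = p(v⁰), let d⁰ ∈ X be the Riesz representative of −E'(w⁰), i.e. (d⁰, v) = −⟨E'(w⁰), v⟩ for all v ∈ X, and for s > 0 set v(s) = (v⁰ + s d⁰)/‖v⁰ + s d⁰‖ ∈ S_{L⊥}. If w⁰ is not a critical point of E (i.e. E'(w⁰) ≠ 0), then for any δ > 0 with ‖E'(w⁰)‖_{X*} > δ there exists σ₀ > 0 such that E(p(v(s))) − E(w⁰) < −α δ ‖v(s) − v⁰‖ for all s ∈ (0, σ₀). -/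

import Mathlib

open scoped RealInnerProductSpace

/-- The closed half space `L_v = L + {t v : t ≥ 0}`. -/
def halfSpace {X : Type*} [NormedAddCommGroup X] [InnerProductSpace ℝ X]
    (L : Submodule ℝ X) (v : X) : Set X :=
  {w | ∃ u ∈ L, ∃ t : ℝ, 0 ≤ t ∧ w = u + t • v}

/-- `w₀` is a local maximum of `E` in the half space `L_v`. -/
def IsLocalMaxIn {X : Type*} [NormedAddCommGroup X] [InnerProductSpace ℝ X]
    (E : X → ℝ) (L : Submodule ℝ X) (v w₀ : X) : Prop :=
  w₀ ∈ halfSpace L v ∧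
    ∃ δ > (0 : ℝ), ∀ w ∈ halfSpace L v, ‖w - w₀‖ < δ → E w ≤ E w₀

set_option maxHeartbeats 2000000 in
/-- **Descent property of the local minimax step** (Li–Zhou): if `w⁰ = p(v⁰)` is not a
critical point, then for any `0 < δ < ‖E'(w⁰)‖` there is `σ₀ > 0` with
`E(p(v(s))) − E(w⁰) < −α δ ‖v(s) − v⁰‖` for all `s ∈ (0, σ₀)`. -/
theorem minimax_descent_property
    {X : Type*} [NormedAddCommGroup X] [InnerProductSpace ℝ X] [CompleteSpace X]
    (E : X → ℝ) (E' : X → X →L[ℝ] ℝ)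
    (hE : ∀ x, HasFDerivAt E (E' x) x) (hE' : Continuous E')
    (L : Submodule ℝ X) (hL : IsClosed (L : Set X))
    (v0 : X) (hv0mem : v0 ∈ Lᗮ) (hv0norm : ‖v0‖ = 1)
    (δp : ℝ) (hδp : 0 < δp)
    (p : X → X)
    (hp : ∀ v, v ∈ Lᗮ → ‖v‖ = 1 → ‖v - v0‖ < δp → IsLocalMaxIn E L v (p v))
    (hpcont : ContinuousWithinAt p {v : X | v ∈ Lᗮ ∧ ‖v‖ = 1 ∧ ‖v - v0‖ < δp} v0)
    (α : ℝ) (hα : 0 < α) (hdist : ∀ u ∈ L, α ≤ ‖p v0 - u‖)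
    (d0 : X) (hd0 : ∀ v : X, ⟪d0, v⟫ = -(E' (p v0) v))
    (vs : ℝ → X) (hvs : ∀ s : ℝ, vs s = ‖v0 + s • d0‖⁻¹ • (v0 + s • d0))
    (hnotcrit : E' (p v0) ≠ 0) :
    ∀ δ : ℝ, 0 < δ → δ < ‖E' (p v0)‖ →
      ∃ σ₀ > (0 : ℝ), ∀ s : ℝ, 0 < s → s < σ₀ →
        (vs s ∈ Lᗮ ∧ ‖vs s‖ = 1 ∧ ‖vs s - v0‖ < δp) ∧
        E (p (vs s)) - E (p v0) < -(α * δ) * ‖vs s - v0‖ := by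
  intro δ hδ hδn
  -- basic decomposition of w0 := p v0
  obtain ⟨hw0mem, δloc, hδloc, hmax⟩ := hp v0 hv0mem hv0norm (by simpa using hδp)
  obtain ⟨u0, hu0L, t0', ht0', hw0eq⟩ := hw0mem
  have hv0u0 : ⟪u0, v0⟫ = 0 := (Submodule.mem_orthogonal L v0).1 hv0mem u0 hu0L
  have ht0α : α ≤ t0' := by
    have h1 := hdist u0 hu0L
    have h2 : p v0 - u0 = t0' • v0 := by rw [hw0eq]; abel
    rw [h2, norm_smul, hv0norm, Real.norm_eq_abs, abs_of_nonneg ht0', mul_one] at h1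
    exact h1
  have ht0pos : 0 < t0' := lt_of_lt_of_le hα ht0α
  -- E' (p v0) vanishes on L
  have hEL : ∀ u ∈ L, E' (p v0) u = 0 := by
    intro u huL
    have hderiv : HasDerivAt (fun c : ℝ => E (p v0 + c • u)) (E' (p v0) u) 0 := by
      have h1 : HasDerivAt (fun c : ℝ => p v0 + c • u) u 0 := by
        simpa using ((hasDerivAt_id (0 : ℝ)).smul_const u).const_add (p v0)
      have h2 := (hE (p v0 + (0 : ℝ) • u)).comp_hasDerivAt 0 h1
      rw [zero_smul, add_zero] at h2
      exact h2
    have hlm : IsLocalMax (fun c : ℝ => E (p v0 + c • u)) 0 := by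
      have hε : (0 : ℝ) < δloc / (‖u‖ + 1) := by positivity
      filter_upwards [Metric.ball_mem_nhds (0 : ℝ) hε] with c hc
      have hcabs : |c| < δloc / (‖u‖ + 1) := by simpa [Real.dist_eq] using hc
      have hmem : p v0 + c • u ∈ halfSpace L v0 :=
        ⟨u0 + c • u, L.add_mem hu0L (L.smul_mem c huL), t0', ht0', by rw [hw0eq]; abel⟩
      have hnorm : ‖(p v0 + c • u) - p v0‖ < δloc := by
        have : ‖(p v0 + c • u) - p v0‖ = |c| * ‖u‖ := by
          rw [add_sub_cancel_left, norm_smul, Real.norm_eq_abs]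
        rw [this]
        have h5 : |c| * (‖u‖ + 1) < δloc := (lt_div_iff₀ (by positivity)).1 hcabs
        have h6 : |c| * (‖u‖ + 1) = |c| * ‖u‖ + |c| := by ring
        linarith [abs_nonneg c]
      simpa using hmax _ hmem hnorm
    exact hlm.hasDerivAt_eq_zero hderiv
  -- E' (p v0) vanishes at v0
  have hEv0 : E' (p v0) v0 = 0 := by
    have hderiv : HasDerivAt (fun c : ℝ => E (p v0 + c • v0)) (E' (p v0) v0) 0 := by
      have h1 : HasDerivAt (fun c : ℝ => p v0 + c • v0) v0 0 := by
        simpa using ((hasDerivAt_id (0 : ℝ)).smul_const v0).const_add (p v0)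
      have h2 := (hE (p v0 + (0 : ℝ) • v0)).comp_hasDerivAt 0 h1
      rw [zero_smul, add_zero] at h2
      exact h2
    have hlm : IsLocalMax (fun c : ℝ => E (p v0 + c • v0)) 0 := by
      have hε : (0 : ℝ) < min δloc t0' := lt_min hδloc ht0pos
      filter_upwards [Metric.ball_mem_nhds (0 : ℝ) hε] with c hc
      have hcabs : |c| < min δloc t0' := by simpa [Real.dist_eq] using hc
      have hmem : p v0 + c • v0 ∈ halfSpace L v0 := by
        refine ⟨u0, hu0L, t0' + c, ?_, ?_⟩
        · have := (abs_lt.1 (lt_of_lt_of_le hcabs (min_le_right _ _))).1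
          linarith
        · rw [hw0eq, add_smul]; abel
      have hnorm : ‖(p v0 + c • v0) - p v0‖ < δloc := by
        have h3 : ‖(p v0 + c • v0) - p v0‖ = |c| := by
          rw [add_sub_cancel_left, norm_smul, Real.norm_eq_abs, hv0norm, mul_one]
        rw [h3]; exact lt_of_lt_of_le hcabs (min_le_left _ _)
      simpa using hmax _ hmem hnorm
    exact hlm.hasDerivAt_eq_zero hderiv
  -- d0 orthogonality
  have hd0L : d0 ∈ Lᗮ := by
    refine (Submodule.mem_orthogonal L d0).2 fun u hu => ?_
    rw [real_inner_comm, hd0 u, hEL u hu, neg_zero]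
  have hd0v0 : ⟪v0, d0⟫ = 0 := by
    rw [real_inner_comm, hd0 v0, hEv0, neg_zero]
  have hd0v0' : ⟪d0, v0⟫ = 0 := by rw [real_inner_comm]; exact hd0v0
  -- δ < ‖d0‖
  have hd0norm : δ < ‖d0‖ := by
    have hle : ‖E' (p v0)‖ ≤ ‖d0‖ := by
      refine ContinuousLinearMap.opNorm_le_bound _ (norm_nonneg d0) fun v => ?_
      have h1 : E' (p v0) v = -⟪d0, v⟫ := by have := hd0 v; linarith
      rw [Real.norm_eq_abs, h1, abs_neg]
      exact abs_real_inner_le_norm d0 v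
    linarith
  have hd0pos : 0 < ‖d0‖ := lt_trans hδ hd0norm
  obtain ⟨δ', hδ'1, hδ'2⟩ : ∃ x : ℝ, δ < x ∧ x < ‖d0‖ :=
    ⟨(δ + ‖d0‖) / 2, by linarith, by linarith⟩
  have hδ'pos : 0 < δ' := lt_trans hδ hδ'1
  -- the norm function N
  set N : ℝ → ℝ := fun s => ‖v0 + s • d0‖ with hNdef
  have hNsq : ∀ s : ℝ, N s ^ 2 = 1 + s ^ 2 * ‖d0‖ ^ 2 := by
    intro s
    simp only [hNdef]
    rw [norm_add_sq_real, real_inner_smul_right, hd0v0, hv0norm, norm_smul,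
      Real.norm_eq_abs, mul_pow, sq_abs]
    ring
  have hN1 : ∀ s : ℝ, 1 ≤ N s := by
    intro s
    nlinarith [hNsq s, norm_nonneg (v0 + s • d0), sq_nonneg (s * ‖d0‖), sq_nonneg s]
  have hNpos : ∀ s : ℝ, 0 < N s := fun s => lt_of_lt_of_le one_pos (hN1 s)
  -- basic vs facts
  have hvsnorm : ∀ s : ℝ, ‖vs s‖ = 1 := by
    intro s
    rw [hvs s, norm_smul, norm_inv, norm_norm]
    exact inv_mul_cancel₀ (ne_of_gt (hNpos s))
  have hvsmem : ∀ s : ℝ, vs s ∈ Lᗮ := by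
    intro s
    rw [hvs s]
    exact Submodule.smul_mem _ _ (Submodule.add_mem _ hv0mem (Submodule.smul_mem _ _ hd0L))
  have hvsdiff : ∀ s : ℝ, 0 ≤ s → ‖vs s - v0‖ ≤ s * ‖d0‖ := by
    intro s hs
    have hinner : ⟪vs s, v0⟫ = (N s)⁻¹ := by
      rw [hvs s, real_inner_smul_left, inner_add_left, real_inner_smul_left, hd0v0',
        real_inner_self_eq_norm_sq, hv0norm]
      simp [hNdef]
    have hX2 : ‖vs s - v0‖ ^ 2 = 2 - 2 * (N s)⁻¹ := by
      rw [norm_sub_sq_real, hvsnorm s, hinner, hv0norm]; ring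
    have hNne : N s ≠ 0 := ne_of_gt (hNpos s)
    have hX2N : ‖vs s - v0‖ ^ 2 * N s = 2 * N s - 2 := by
      rw [hX2, sub_mul, mul_assoc, inv_mul_cancel₀ hNne, mul_one]
    have hcube : 0 ≤ N s ^ 3 - 3 * N s + 2 := by
      nlinarith [sq_nonneg (N s - 1), hN1 s]
    nlinarith [hX2N, hNsq s, hN1 s, norm_nonneg (vs s - v0), mul_nonneg hs (norm_nonneg d0),
      hNpos s, sq_nonneg (‖vs s - v0‖ - s * ‖d0‖), sq_nonneg (‖vs s - v0‖ + s * ‖d0‖)]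
  -- E' near p v0 in direction d0
  have hEd0 : E' (p v0) d0 = -‖d0‖ ^ 2 := by
    have := hd0 d0
    rw [real_inner_self_eq_norm_sq] at this
    linarith
  have hcontd0 : Continuous fun x => E' x d0 :=
    (ContinuousLinearMap.apply ℝ ℝ d0).continuous.comp hE'
  obtain ⟨r, hrpos, hr⟩ : ∃ r > 0, ∀ ξ : X, ‖ξ - p v0‖ < r → E' ξ d0 < -(δ' * ‖d0‖) := by
    have hlt : E' (p v0) d0 < -(δ' * ‖d0‖) := by
      rw [hEd0]
      have h1 := mul_lt_mul_of_pos_right hδ'2 hd0pos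
      have h2 : ‖d0‖ ^ 2 = ‖d0‖ * ‖d0‖ := sq ‖d0‖
      linarith
    have hopen : IsOpen {x : X | E' x d0 < -(δ' * ‖d0‖)} :=
      isOpen_lt hcontd0 continuous_const
    obtain ⟨r, hrpos, hball⟩ := Metric.mem_nhds_iff.1 (hopen.mem_nhds hlt)
    exact ⟨r, hrpos, fun ξ hξ => hball (by simpa [Metric.mem_ball, dist_eq_norm] using hξ)⟩
  -- auxiliary functions of s
  set ts : ℝ → ℝ := fun s => ⟪p (vs s), vs s⟫ with htsdef
  set wb : ℝ → X := fun s => p (vs s) - ts s • vs s + (ts s / N s) • v0 with hwbdef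
  have ht0inner : ⟪p v0, v0⟫ = t0' := by
    rw [hw0eq, inner_add_left, real_inner_smul_left, hv0u0, real_inner_self_eq_norm_sq,
      hv0norm]
    ring
  -- tendsto facts
  have hTN : Filter.Tendsto N (nhds 0) (nhds 1) := by
    have hc : Continuous N := continuous_norm.comp (continuous_const.add
      (continuous_id.smul continuous_const))
    have := hc.tendsto 0
    simpa [hNdef, hv0norm] using this
  have hTNl : Filter.Tendsto N (nhdsWithin 0 (Set.Ioi 0)) (nhds 1) :=
    hTN.mono_left nhdsWithin_le_nhds
  have hcontb : Continuous fun s : ℝ => v0 + s • d0 :=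
    continuous_const.add (continuous_id.smul continuous_const)
  have hTvs : Filter.Tendsto vs (nhdsWithin 0 (Set.Ioi 0)) (nhds v0) := by
    have hc : Filter.Tendsto (fun s : ℝ => (N s)⁻¹ • (v0 + s • d0))
        (nhds 0) (nhds ((1 : ℝ)⁻¹ • (v0 + (0 : ℝ) • d0))) :=
      (hTN.inv₀ one_ne_zero).smul (hcontb.tendsto 0)
    have he : (1:ℝ)⁻¹ • (v0 + (0:ℝ) • d0) = v0 := by
      rw [zero_smul, add_zero, inv_one, one_smul]
    rw [he] at hc
    exact ((hc.congr fun s => (hvs s).symm).mono_left nhdsWithin_le_nhds)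
  have hvsball : ∀ᶠ s in nhdsWithin 0 (Set.Ioi 0), ‖vs s - v0‖ < δp := by
    have := hTvs (Metric.ball_mem_nhds v0 hδp)
    filter_upwards [this] with s hs
    simpa [Metric.mem_ball, dist_eq_norm] using hs
  have hTw : Filter.Tendsto (fun s => p (vs s)) (nhdsWithin 0 (Set.Ioi 0)) (nhds (p v0)) := by
    refine Filter.Tendsto.comp hpcont (tendsto_nhdsWithin_iff.2 ⟨hTvs, ?_⟩)
    filter_upwards [hvsball] with s hs
    exact ⟨hvsmem s, hvsnorm s, hs⟩
  have hTt : Filter.Tendsto ts (nhdsWithin 0 (Set.Ioi 0)) (nhds t0') := by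
    have h1 := Filter.Tendsto.inner (𝕜 := ℝ) hTw hTvs
    rw [ht0inner] at h1
    exact h1
  have hTwb : Filter.Tendsto wb (nhdsWithin 0 (Set.Ioi 0)) (nhds (p v0)) := by
    have h1 : Filter.Tendsto wb (nhdsWithin 0 (Set.Ioi 0))
        (nhds (p v0 - t0' • v0 + (t0' / 1) • v0)) :=
      ((hTw.sub (hTt.smul hTvs)).add ((hTt.div hTNl one_ne_zero).smul
        (tendsto_const_nhds)))
    have h2 : p v0 - t0' • v0 + (t0' / 1) • v0 = p v0 := by
      rw [div_one]; abel
    rwa [h2] at h1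
  have hwbball : ∀ᶠ s in nhdsWithin 0 (Set.Ioi 0),
      ‖wb s - p v0‖ < min δloc (r / 2) := by
    have := hTwb (Metric.ball_mem_nhds (p v0) (lt_min hδloc (half_pos hrpos)))
    filter_upwards [this] with s hs
    simpa [Metric.mem_ball, dist_eq_norm] using hs
  have hTτ : Filter.Tendsto (fun s => ts s * s / N s * ‖d0‖)
      (nhdsWithin 0 (Set.Ioi 0)) (nhds 0) := by
    have h1 : Filter.Tendsto (fun s => ts s * s / N s * ‖d0‖)
        (nhdsWithin 0 (Set.Ioi 0)) (nhds (t0' * 0 / 1 * ‖d0‖)) :=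
      (((hTt.mul (Filter.tendsto_id.mono_right nhdsWithin_le_nhds)).div hTNl one_ne_zero).mul
        tendsto_const_nhds)
    simpa using h1
  have hτsmall : ∀ᶠ s in nhdsWithin 0 (Set.Ioi 0), ts s * s / N s * ‖d0‖ < r / 2 := by
    have hc : (0 : ℝ) < r / 2 := half_pos hrpos
    filter_upwards [hTτ (Metric.ball_mem_nhds 0 hc)] with s hs
    have hs' : |ts s * s / N s * ‖d0‖ - 0| < r / 2 := hs
    rw [sub_zero] at hs'
    exact lt_of_le_of_lt (le_abs_self _) hs'
  have hAlarge : ∀ᶠ s in nhdsWithin 0 (Set.Ioi 0), α * δ < ts s * δ' / N s := by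
    have h1 : Filter.Tendsto (fun s => ts s * δ' / N s)
        (nhdsWithin 0 (Set.Ioi 0)) (nhds (t0' * δ' / 1)) :=
      (hTt.mul tendsto_const_nhds).div hTNl one_ne_zero
    have h2 : α * δ < t0' * δ' / 1 := by
      rw [div_one]; nlinarith
    exact h1.eventually_const_lt h2
  -- the main eventual statement
  have big : ∀ᶠ s in nhdsWithin 0 (Set.Ioi 0),
      (vs s ∈ Lᗮ ∧ ‖vs s‖ = 1 ∧ ‖vs s - v0‖ < δp) ∧
        E (p (vs s)) - E (p v0) < -(α * δ) * ‖vs s - v0‖ := by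
    filter_upwards [self_mem_nhdsWithin, hvsball, hwbball, hτsmall, hAlarge]
      with s hs hδps hwbs hτs hAs
    have hspos : 0 < s := hs
    refine ⟨⟨hvsmem s, hvsnorm s, hδps⟩, ?_⟩
    -- decomposition of p (vs s)
    obtain ⟨⟨u', hu'L, t', ht'0, hpeq⟩, _⟩ := hp (vs s) (hvsmem s) (hvsnorm s) hδps
    have hu'vs : ⟪u', vs s⟫ = 0 := (Submodule.mem_orthogonal L (vs s)).1 (hvsmem s) u' hu'L
    have hts' : ts s = t' := by
      simp only [htsdef]
      rw [hpeq, inner_add_left, hu'vs, real_inner_smul_left, real_inner_self_eq_norm_sq,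
        hvsnorm s]
      ring
    have h0A : 0 < ts s * δ' / N s := lt_trans (mul_pos hα hδ) hAs
    have htspos : 0 < ts s := by
      rcases div_pos_iff.1 h0A with ⟨h1, _⟩ | ⟨_, h2⟩
      · nlinarith
      · exact absurd h2 (not_lt.2 (hNpos s).le)
    -- wb s is in the half space and E (wb s) ≤ E (p v0)
    have hwbdecomp : wb s = u' + (ts s / N s) • v0 := by
      simp only [hwbdef]
      have h9 : p (vs s) - ts s • vs s = u' := by rw [hpeq, hts']; abel
      rw [h9]
    have hwbmem : wb s ∈ halfSpace L v0 :=
      ⟨u', hu'L, ts s / N s, div_nonneg htspos.le (hNpos s).le, hwbdecomp⟩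
    have hEwb : E (wb s) ≤ E (p v0) :=
      hmax _ hwbmem (lt_of_lt_of_le hwbs (min_le_left _ _))
    -- p (vs s) = wb s + τ • d0
    set τ : ℝ := ts s * s / N s with hτdef
    have hτpos : 0 < τ := by
      rw [hτdef]; exact div_pos (mul_pos htspos hspos) (hNpos s)
    have hpvs : p (vs s) = wb s + τ • d0 := by
      rw [hwbdecomp, hτdef, hpeq, hts', hvs s]
      simp only [hNdef]
      match_scalars <;> field_simp
    -- mean value theorem
    have hg' : ∀ c : ℝ, HasDerivAt (fun c : ℝ => E (wb s + c • d0))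
        (E' (wb s + c • d0) d0) c := by
      intro c
      have h1 : HasDerivAt (fun c : ℝ => wb s + c • d0) d0 c := by
        simpa using ((hasDerivAt_id c).smul_const d0).const_add (wb s)
      exact (hE (wb s + c • d0)).comp_hasDerivAt c h1
    obtain ⟨c, hc, hceq⟩ := exists_hasDerivAt_eq_slope (fun c : ℝ => E (wb s + c • d0))
      (fun c : ℝ => E' (wb s + c • d0) d0) hτpos
      (Continuous.continuousOn (continuous_iff_continuousAt.2 fun c => (hg' c).continuousAt))
      (fun c _ => hg' c)
    -- bound the derivative at c
    have hξ : ‖(wb s + c • d0) - p v0‖ < r := by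
      have h1 : ‖(wb s + c • d0) - p v0‖ ≤ ‖wb s - p v0‖ + c * ‖d0‖ := by
        have : (wb s + c • d0) - p v0 = (wb s - p v0) + c • d0 := by abel
        rw [this]
        calc ‖(wb s - p v0) + c • d0‖ ≤ ‖wb s - p v0‖ + ‖c • d0‖ := norm_add_le _ _
          _ = ‖wb s - p v0‖ + c * ‖d0‖ := by
            rw [norm_smul, Real.norm_eq_abs, abs_of_pos hc.1]
      have h2 : c * ‖d0‖ ≤ τ * ‖d0‖ :=
        mul_le_mul_of_nonneg_right hc.2.le (norm_nonneg d0)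
      have h3 : ‖wb s - p v0‖ < r / 2 := lt_of_lt_of_le hwbs (min_le_right _ _)
      have h4 : τ * ‖d0‖ < r / 2 := hτs
      linarith
    have hslope : E' (wb s + c • d0) d0 < -(δ' * ‖d0‖) := hr _ hξ
    -- assemble
    have hEineq : E (wb s + τ • d0) - E (wb s) < τ * (-(δ' * ‖d0‖)) := by
      rw [hceq] at hslope
      have h10 := (div_lt_iff₀ hτpos).1 (by simpa using hslope)
      have h11 : -(δ' * ‖d0‖) * τ = τ * (-(δ' * ‖d0‖)) := by ring
      linarith
    rw [← hpvs] at hEineq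
    -- final chain
    have hchain : E (p (vs s)) - E (p v0) < -(ts s * δ' / N s * (s * ‖d0‖)) := by
      have hring : τ * (-(δ' * ‖d0‖)) = -(ts s * δ' / N s * (s * ‖d0‖)) := by
        rw [hτdef]; ring
      linarith
    have hApos : 0 < ts s * δ' / N s := lt_trans (by positivity) hAs
    have h7 : ts s * δ' / N s * ‖vs s - v0‖ ≤ ts s * δ' / N s * (s * ‖d0‖) :=
      mul_le_mul_of_nonneg_left (hvsdiff s hspos.le) hApos.le
    have h8 : α * δ * ‖vs s - v0‖ ≤ ts s * δ' / N s * ‖vs s - v0‖ :=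
      mul_le_mul_of_nonneg_right hAs.le (norm_nonneg _)
    linarith
  -- extract σ₀
  rw [Filter.eventually_iff, mem_nhdsGT_iff_exists_Ioo_subset] at big
  obtain ⟨σ₀, hσ₀, hsub⟩ := big
  exact ⟨σ₀, hσ₀, fun s hs1 hs2 => hsub ⟨hs1, hs2⟩⟩
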